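/- Let (W,S) be a Coxeter group, let s, t ∈ S be distinct with m_{s,t} < ∞, and let I = {s,t}. Let q ∈ W, and let w be the unique minimal-length element of the coset W_I q⁻¹, where W_I is the parabolic subgroup generated by I. If u ∈ S satisfies u ∈ q W_I q⁻¹, then wuw⁻¹ ∈ I. -/

import Mathlib

namespace CoxAux

open List

variable {B W : Type*} [Group W] {M : CoxeterMatrix B} (cs : CoxeterSystem M W)

section PureGroup

variable {G : Type*} [Group G]

open scoped Classical in
/-- The permutation of `G × ZMod 2` attached to an involution `g`. -/
noncomputable def refPerm (g : G) (hg : g * g = 1) : Equiv.Perm (G × ZMod 2) :=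
  Function.Involutive.toPerm
    (fun p => (g * p.1 * g, p.2 + (if p.1 = g then 1 else 0)))
    (by
      rintro ⟨t, ε⟩
      classical
      have h1 : g * (g * t * g) * g = t := by
        have : g * (g * t * g) * g = (g * g) * t * (g * g) := by group
        rw [this, hg, one_mul, mul_one]
      have h2 : (g * t * g = g) ↔ (t = g) := by
        constructor
        · intro h
          have ht : t = g⁻¹ * (g * t * g) * g⁻¹ := by group
          have hginv : g⁻¹ = g := inv_eq_of_mul_eq_one_left hg
          rw [h, hginv] at ht
          rw [ht, hg, one_mul]
        · rintro rfl
          rw [hg, one_mul]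
      simp only [Prod.mk.injEq]
      refine ⟨h1, ?_⟩
      rw [if_congr h2 rfl rfl]
      have h11 : (1 : ZMod 2) + 1 = 0 := by decide
      by_cases h : t = g <;> simp [h, add_assoc, h11])

open scoped Classical in
lemma refPerm_apply (g : G) (hg : g * g = 1) (t : G) (ε : ZMod 2) :
    refPerm g hg (t, ε) = (g * t * g, ε + (if t = g then 1 else 0)) :=
  rfl

open scoped Classical in
lemma refPerm_braid (a b : G) (ha : a * a = 1) (hb : b * b = 1) (m : ℕ)
    (hm : (a * b) ^ m = 1) :
    (refPerm a ha * refPerm b hb) ^ m = 1 := by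
  classical
  have hainv : a⁻¹ = a := inv_eq_of_mul_eq_one_left ha
  have hbinv : b⁻¹ = b := inv_eq_of_mul_eq_one_left hb
  obtain ⟨c, hc⟩ : ∃ c : G, c = a * b := ⟨a * b, rfl⟩
  rw [← hc] at hm
  have hba : b * a = c⁻¹ := by
    have h1 : c * (b * a) = 1 := by
      rw [hc]
      have : a * b * (b * a) = a * (b * b) * a := by group
      rw [this, hb, mul_one, ha]
    exact (inv_eq_of_mul_eq_one_right h1).symm
  have hbc : ∀ n : ℕ, b * c ^ n = (c ^ n)⁻¹ * b := by
    intro n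
    induction n with
    | zero => simp
    | succ n ih =>
      have h0 : b * c ^ (n + 1) = (b * c ^ n) * c := by rw [pow_succ]; group
      have hbc1 : b * c = c⁻¹ * b := by
        rw [← hba, hc]
        group
      rw [h0, ih, mul_assoc, hbc1, ← mul_assoc, ← mul_inv_rev, ← pow_succ']
  have key : ∀ (k : ℕ) (t : G) (ε : ZMod 2),
      ((refPerm a ha * refPerm b hb) ^ k) (t, ε) =
        (c ^ k * t * (c ^ k)⁻¹,
          ε + ∑ n ∈ Finset.range (2 * k), (if t = (c ^ n)⁻¹ * b then (1 : ZMod 2) else 0)) := by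
    intro k
    induction k with
    | zero => intro t ε; simp
    | succ k ih =>
      intro t ε
      rw [pow_succ', Equiv.Perm.mul_apply, ih t ε, Equiv.Perm.mul_apply,
        refPerm_apply, refPerm_apply]
      have E1 : (c ^ k)⁻¹ * b * c ^ k = (c ^ (2 * k))⁻¹ * b := by
        rw [mul_assoc, hbc, ← mul_assoc, ← mul_inv_rev, ← pow_add, two_mul]
      have E2 : (c ^ k)⁻¹ * (b * a * b) * c ^ k = (c ^ (2 * k + 1))⁻¹ * b := by
        have hbab : b * a * b = c⁻¹ * b := by rw [hba]
        rw [hbab]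
        have step : (c ^ k)⁻¹ * (c⁻¹ * b) * c ^ k = (c ^ (k + 1))⁻¹ * (b * c ^ k) := by
          rw [pow_succ', mul_inv_rev]
          group
        rw [step, hbc, ← mul_assoc, ← mul_inv_rev, ← pow_add]
        have : k + (k + 1) = 2 * k + 1 := by omega
        rw [this]
      have e1 : ((c ^ k * t * (c ^ k)⁻¹ = b)) ↔ (t = (c ^ (2 * k))⁻¹ * b) := by
        rw [← E1]
        constructor
        · intro h; rw [← h]; group
        · intro h; rw [h]; group
      have e2 : (b * (c ^ k * t * (c ^ k)⁻¹) * b = a) ↔ (t = (c ^ (2 * k + 1))⁻¹ * b) := by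
        rw [← E2]
        constructor
        · intro h
          have hX : c ^ k * t * (c ^ k)⁻¹ = b⁻¹ * a * b⁻¹ := by
            have : c ^ k * t * (c ^ k)⁻¹ = b⁻¹ * (b * (c ^ k * t * (c ^ k)⁻¹) * b) * b⁻¹ := by
              group
            rw [this, h]
          rw [hbinv] at hX
          have : t = (c ^ k)⁻¹ * (c ^ k * t * (c ^ k)⁻¹) * c ^ k := by group
          rw [this, hX]
        · intro h
          have hX : c ^ k * t * (c ^ k)⁻¹ = b * a * b := by
            rw [h]; group
          rw [hX]
          have : b * (b * a * b) * b = (b * b) * a * (b * b) := by group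
          rw [this, hb, one_mul, mul_one]
      simp only [Prod.mk.injEq]
      constructor
      · have : a * (b * (c ^ k * t * (c ^ k)⁻¹) * b) * a
            = (a * b) * (c ^ k * t * (c ^ k)⁻¹) * (b * a) := by group
        rw [this, hba, ← hc, pow_succ']
        group
      · rw [if_congr e2 rfl rfl, if_congr e1 rfl rfl]
        have hr : 2 * (k + 1) = (2 * k) + 1 + 1 := by ring
        rw [hr, Finset.sum_range_succ, Finset.sum_range_succ]
        push_cast
        ring
  refine Equiv.ext fun p => ?_
  obtain ⟨t, ε⟩ := p
  rw [key m t ε]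
  have hzero : ∑ n ∈ Finset.range (2 * m), (if t = (c ^ n)⁻¹ * b then (1 : ZMod 2) else 0) = 0 := by
    have h2 : 2 * m = m + m := by ring
    rw [h2, Finset.sum_range_add]
    have hcongr : ∀ n, (if t = (c ^ (m + n))⁻¹ * b then (1 : ZMod 2) else 0)
        = (if t = (c ^ n)⁻¹ * b then (1 : ZMod 2) else 0) := by
      intro n
      rw [pow_add, hm, one_mul]
    rw [Finset.sum_congr rfl (fun n _ => hcongr n)]
    exact CharTwo.add_self_eq_zero _
  rw [hzero, hm]
  simp

end PureGroup

/-- The permutation attached to a simple reflection. -/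
noncomputable def sigma (i : B) : Equiv.Perm (W × ZMod 2) :=
  refPerm (cs.simple i) (cs.simple_mul_simple_self i)

open scoped Classical in
lemma sigma_apply (i : B) (t : W) (ε : ZMod 2) :
    sigma cs i (t, ε) = (cs.simple i * t * cs.simple i, ε + (if t = cs.simple i then 1 else 0)) :=
  rfl

lemma sigma_liftable : M.IsLiftable (sigma cs) := by
  intro i j
  exact refPerm_braid (cs.simple i) (cs.simple j) (cs.simple_mul_simple_self i)
    (cs.simple_mul_simple_self j) (M.M i j) (cs.simple_mul_simple_pow i j)

/-- The homomorphism `W →* Perm (W × ZMod 2)`. -/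
noncomputable def phi : W →* Equiv.Perm (W × ZMod 2) :=
  cs.lift ⟨sigma cs, sigma_liftable cs⟩

lemma phi_simple (i : B) : phi cs (cs.simple i) = sigma cs i :=
  cs.lift_apply_simple (sigma_liftable cs) i

open scoped Classical in
/-- Count (mod 2) of `t` in the right inversion sequence of `ω`. -/
noncomputable def ct (ω : List B) (t : W) : ZMod 2 :=
  ((cs.rightInvSeq ω).map (fun r => if t = r then (1 : ZMod 2) else 0)).sum

lemma ris_cons (i : B) (ω : List B) :
    cs.rightInvSeq (i :: ω) =
      ((cs.wordProd ω)⁻¹ * cs.simple i * cs.wordProd ω) :: cs.rightInvSeq ω := rfl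

open scoped Classical in
lemma ct_cons (i : B) (ω : List B) (t : W) :
    ct cs (i :: ω) t =
      (if t = (cs.wordProd ω)⁻¹ * cs.simple i * cs.wordProd ω then (1 : ZMod 2) else 0)
        + ct cs ω t := by
  rw [ct, ris_cons, List.map_cons, List.sum_cons, ct]

open scoped Classical in
lemma phi_wordProd (ω : List B) (t : W) (ε : ZMod 2) :
    phi cs (cs.wordProd ω) (t, ε) =
      (cs.wordProd ω * t * (cs.wordProd ω)⁻¹, ε + ct cs ω t) := by
  induction ω generalizing ε with
  | nil => simp [ct]
  | cons i ω ih =>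
    rw [cs.wordProd_cons, map_mul, Equiv.Perm.mul_apply, ih, phi_simple, sigma_apply]
    have e : (cs.wordProd ω * t * (cs.wordProd ω)⁻¹ = cs.simple i)
        ↔ (t = (cs.wordProd ω)⁻¹ * cs.simple i * cs.wordProd ω) := by
      constructor
      · intro h; rw [← h]; group
      · intro h; rw [h]; group
    rw [if_congr e rfl rfl, ct_cons]
    simp only [Prod.mk.injEq]
    constructor
    · rw [mul_inv_rev, cs.inv_simple]
      group
    · push_cast; ring

lemma ct_eq_of_wordProd_eq {ω ω' : List B} (h : cs.wordProd ω = cs.wordProd ω') (t : W) :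
    ct cs ω t = ct cs ω' t := by
  have h1 := phi_wordProd cs ω t 0
  have h2 := phi_wordProd cs ω' t 0
  rw [h] at h1
  rw [h1] at h2
  have := (Prod.mk.injEq _ _ _ _).mp h2
  simpa using this.2

open scoped Classical in
lemma sum_ind_of_not_mem {l : List W} {t : W} (h : t ∉ l) :
    (l.map (fun r => if t = r then (1 : ZMod 2) else 0)).sum = 0 := by
  induction l with
  | nil => simp
  | cons r l ih =>
    simp only [List.mem_cons, not_or] at h
    simp [h.1, ih h.2]

open scoped Classical in
lemma sum_ind_of_mem {l : List W} {t : W} (hn : l.Nodup) (h : t ∈ l) :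
    (l.map (fun r => if t = r then (1 : ZMod 2) else 0)).sum = 1 := by
  induction l with
  | nil => simp at h
  | cons r l ih =>
    rw [List.nodup_cons] at hn
    rcases List.mem_cons.mp h with rfl | h'
    · simp [sum_ind_of_not_mem hn.1]
    · have : t ≠ r := by rintro rfl; exact hn.1 h'
      simp [this, ih hn.2 h']

/-- Right exchange (membership form) for simple reflections. -/
lemma mem_ris_of_descent {x : W} {k : B} (h : cs.length (x * cs.simple k) < cs.length x)
    {χ : List B} (hred : cs.IsReduced χ) (hπ : cs.wordProd χ = x) :
    cs.simple k ∈ cs.rightInvSeq χ := by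
  classical
  obtain ⟨σ, hσred, hσ⟩ := cs.exists_reduced_word' (x * cs.simple k)
  have hlen : cs.length (x * cs.simple k) + 1 = cs.length x := by
    rcases cs.length_mul_simple x k with h' | h' <;> omega
  have hπ' : cs.wordProd (σ ++ [k]) = x := by
    rw [cs.wordProd_append, cs.wordProd_singleton, ← hσ]
    simp [mul_assoc, cs.simple_mul_simple_self]
  have hred' : cs.IsReduced (σ ++ [k]) := by
    unfold CoxeterSystem.IsReduced
    rw [hπ', List.length_append, List.length_singleton, ← hσred, ← hσ, hlen]
  have hmem : cs.simple k ∈ cs.rightInvSeq (σ ++ [k]) := by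
    have := cs.rightInvSeq_concat σ k
    rw [← List.concat_eq_append, this]
    simp
  have h1 : ct cs (σ ++ [k]) (cs.simple k) = 1 :=
    sum_ind_of_mem (hred'.nodup_rightInvSeq) hmem
  have h0 : ct cs χ (cs.simple k) = 1 := by
    rw [ct_eq_of_wordProd_eq cs (by rw [hπ, hπ'] : cs.wordProd χ = cs.wordProd (σ ++ [k]))]
    exact h1
  by_contra hnot
  rw [ct, sum_ind_of_not_mem hnot] at h0
  exact one_ne_zero h0.symm

/-- Left exchange for simple reflections. -/
lemma exists_eraseIdx_of_left_descent {x : W} {k : B}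
    (h : cs.length (cs.simple k * x) < cs.length x)
    {χ : List B} (hred : cs.IsReduced χ) (hπ : cs.wordProd χ = x) :
    ∃ n, n < χ.length ∧ cs.simple k * x = cs.wordProd (χ.eraseIdx n) := by
  have hrev : cs.IsReduced χ.reverse := (cs.isReduced_reverse_iff χ).mpr hred
  have hπr : cs.wordProd χ.reverse = x⁻¹ := by rw [cs.wordProd_reverse, hπ]
  have h' : cs.length (x⁻¹ * cs.simple k) < cs.length x⁻¹ := by
    have : x⁻¹ * cs.simple k = (cs.simple k * x)⁻¹ := by
      rw [mul_inv_rev, cs.inv_simple]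
    rw [this, cs.length_inv, cs.length_inv]
    exact h
  have hmem : cs.simple k ∈ cs.rightInvSeq χ.reverse :=
    mem_ris_of_descent cs h' hrev hπr
  rw [cs.rightInvSeq_reverse, List.mem_reverse] at hmem
  obtain ⟨n, hn, hget⟩ := List.mem_iff_getElem.mp hmem
  have hn' : n < χ.length := by
    rwa [cs.length_leftInvSeq] at hn
  refine ⟨n, hn', ?_⟩
  have := cs.getD_leftInvSeq_mul_wordProd χ n
  rw [List.getD_eq_getElem _ _ hn, hget, hπ] at this
  exact this

/-- Deletion: a non-reduced word can be shortened by two letters, keeping its letters. -/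
lemma deletion : ∀ (μ : List B), ¬ cs.IsReduced μ →
    ∃ μ' : List B, cs.wordProd μ' = cs.wordProd μ ∧ μ'.length + 2 = μ.length ∧
      ∀ l ∈ μ', l ∈ μ := by
  intro μ
  induction μ with
  | nil => intro h; exact absurd (by simp [CoxeterSystem.IsReduced]) h
  | cons k ω ih =>
    intro h
    by_cases hω : cs.IsReduced ω
    · have hlt : cs.length (cs.simple k * cs.wordProd ω) < cs.length (cs.wordProd ω) := by
        rcases cs.length_simple_mul (cs.wordProd ω) k with h' | h'
        · exfalso
          apply h
          unfold CoxeterSystem.IsReduced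
          rw [cs.wordProd_cons, h', hω, List.length_cons]
        · have hne := cs.length_simple_mul_ne (cs.wordProd ω) k
          omega
      obtain ⟨n, hn, heq⟩ := exists_eraseIdx_of_left_descent cs hlt hω rfl
      refine ⟨ω.eraseIdx n, ?_, ?_, ?_⟩
      · rw [← heq, cs.wordProd_cons]
      · have := List.length_eraseIdx_add_one hn
        simp only [List.length_cons]
        omega
      · intro l hl
        exact List.mem_cons_of_mem _ ((List.eraseIdx_sublist ω n).mem hl)
    · obtain ⟨ω', h1, h2, h3⟩ := ih hω
      refine ⟨k :: ω', ?_, ?_, ?_⟩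
      · rw [cs.wordProd_cons, cs.wordProd_cons, h1]
      · simp only [List.length_cons]; omega
      · intro l hl
        rcases List.mem_cons.mp hl with rfl | hl'
        · exact List.mem_cons_self
        · exact List.mem_cons_of_mem _ (h3 l hl')

/-- Every element of the parabolic `closure {s i, s j}` has a reduced word
in the letters `i`, `j`. -/
lemma support {i j : B} {p : W} (hp : p ∈ Subgroup.closure {cs.simple i, cs.simple j}) :
    ∃ μ : List B, cs.IsReduced μ ∧ (∀ l ∈ μ, l = i ∨ l = j) ∧ p = cs.wordProd μ := by
  have step1 : ∃ μ : List B, (∀ l ∈ μ, l = i ∨ l = j) ∧ p = cs.wordProd μ := by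
    induction hp using Subgroup.closure_induction with
    | mem x hx =>
      rcases hx with rfl | rfl
      · exact ⟨[i], by simp, by simp⟩
      · exact ⟨[j], by simp, by simp⟩
    | one => exact ⟨[], by simp, by simp⟩
    | mul x y hx hy ihx ihy =>
      obtain ⟨μ₁, h1, e1⟩ := ihx
      obtain ⟨μ₂, h2, e2⟩ := ihy
      refine ⟨μ₁ ++ μ₂, ?_, ?_⟩
      · intro l hl
        rcases List.mem_append.mp hl with hl | hl
        · exact h1 l hl
        · exact h2 l hl
      · rw [cs.wordProd_append, e1, e2]
    | inv x hx ihx =>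
      obtain ⟨μ₁, h1, e1⟩ := ihx
      refine ⟨μ₁.reverse, ?_, ?_⟩
      · intro l hl; exact h1 l (List.mem_reverse.mp hl)
      · rw [cs.wordProd_reverse, e1]
  obtain ⟨μ, hμ, rfl⟩ := step1
  clear hp
  suffices H : ∀ (n : ℕ) (μ : List B), μ.length ≤ n → (∀ l ∈ μ, l = i ∨ l = j) →
      ∃ ν, cs.IsReduced ν ∧ (∀ l ∈ ν, l = i ∨ l = j) ∧ cs.wordProd μ = cs.wordProd ν by
    obtain ⟨ν, h1, h2, h3⟩ := H μ.length μ le_rfl hμ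
    exact ⟨ν, h1, h2, h3⟩
  intro n
  induction n with
  | zero =>
    intro μ hle hμ'
    have : μ = [] := List.length_eq_zero_iff.mp (by omega)
    subst this
    exact ⟨[], by simp [CoxeterSystem.IsReduced], by simp, rfl⟩
  | succ n ih =>
    intro μ hle hμ'
    by_cases hred : cs.IsReduced μ
    · exact ⟨μ, hred, hμ', rfl⟩
    · obtain ⟨μ', e1, e2, e3⟩ := deletion cs μ hred
      obtain ⟨ν, h1, h2, h3⟩ := ih μ' (by omega) (fun l hl => hμ' l (e3 l hl))
      exact ⟨ν, h1, h2, by rw [← e1, h3]⟩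

/-- Key lemma: lengths add on multiplying a minimal coset representative
by an element of the parabolic subgroup. -/
lemma length_add_of_min {i j : B} (w : W)
    (Hmin : ∀ p ∈ Subgroup.closure {cs.simple i, cs.simple j},
      cs.length w ≤ cs.length (p * w)) :
    ∀ p ∈ Subgroup.closure {cs.simple i, cs.simple j},
      cs.length (p * w) = cs.length p + cs.length w := by
  suffices H : ∀ n : ℕ, ∀ p ∈ Subgroup.closure {cs.simple i, cs.simple j},
      cs.length p ≤ n → cs.length (p * w) = cs.length p + cs.length w by
    exact fun p hp => H (cs.length p) p hp le_rfl
  intro n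
  induction n with
  | zero =>
    intro p hp hlen
    have : p = 1 := cs.length_eq_zero_iff.mp (Nat.le_zero.mp hlen)
    subst this
    simp
  | succ n ihn =>
    intro p hp hlen
    by_cases hp1 : p = 1
    · subst hp1; simp
    · obtain ⟨μ, hred, hlet, rfl⟩ := support cs hp
      rcases μ with _ | ⟨k, ω⟩
      · exact absurd (by simp) hp1
      have hkij : k = i ∨ k = j := hlet k (List.mem_cons_self)
      have hsk : cs.simple k ∈ Subgroup.closure {cs.simple i, cs.simple j} := by
        apply Subgroup.subset_closure
        rcases hkij with rfl | rfl
        · exact Set.mem_insert _ _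
        · exact Set.mem_insert_of_mem _ rfl
      have hωred : cs.IsReduced ω := by
        have := CoxeterSystem.IsReduced.drop hred 1
        simpa using this
      set p₂ := cs.wordProd ω with hp₂
      have hp₂mem : p₂ ∈ Subgroup.closure {cs.simple i, cs.simple j} := by
        have : p₂ = cs.simple k * cs.wordProd (k :: ω) := by
          rw [cs.wordProd_cons, ← mul_assoc, cs.simple_mul_simple_self, one_mul]
        rw [this]
        exact Subgroup.mul_mem _ hsk hp
      have hcons : cs.wordProd (k :: ω) = cs.simple k * p₂ := cs.wordProd_cons k ω
      have hlp : cs.length (cs.wordProd (k :: ω)) = ω.length + 1 := by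
        rw [hred]; simp
      have hlp₂ : cs.length p₂ = ω.length := hωred
      have ihp₂ : cs.length (p₂ * w) = cs.length p₂ + cs.length w :=
        ihn p₂ hp₂mem (by omega)
      rcases cs.length_simple_mul (p₂ * w) k with hgood | hbad
      · have e : cs.length (cs.wordProd (k :: ω) * w) = cs.length (p₂ * w) + 1 := by
          rw [hcons, mul_assoc]; exact hgood
        rw [e, ihp₂, hlp, hlp₂]
        omega
      · exfalso
        have hne := cs.length_simple_mul_ne (p₂ * w) k
        have hlt : cs.length (cs.simple k * (p₂ * w)) < cs.length (p₂ * w) := by omega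
        obtain ⟨δ, hδred, hδ⟩ := cs.exists_reduced_word' w
        have hχπ : cs.wordProd (ω ++ δ) = p₂ * w := by
          rw [cs.wordProd_append, ← hp₂, ← hδ]
        have hχred : cs.IsReduced (ω ++ δ) := by
          unfold CoxeterSystem.IsReduced
          rw [hχπ, ihp₂, List.length_append, hlp₂, ← hδred, ← hδ]
        obtain ⟨m, hm, heq⟩ := exists_eraseIdx_of_left_descent cs hlt hχred hχπ
        by_cases hcase : m < ω.length
        · rw [List.eraseIdx_append_of_lt_length hcase, cs.wordProd_append, ← hδ] at heq
          have heq' : (cs.simple k * p₂) * w = cs.wordProd (ω.eraseIdx m) * w := by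
            rw [mul_assoc]; exact heq
          have hpe : cs.wordProd (k :: ω) = cs.wordProd (ω.eraseIdx m) := by
            rw [hcons]
            exact mul_right_cancel heq' 
          have : cs.length (cs.wordProd (k :: ω)) ≤ (ω.eraseIdx m).length := by
            rw [hpe]; exact cs.length_wordProd_le _
          have := List.length_eraseIdx_add_one hcase
          omega
        · have hcase' : ω.length ≤ m := by omega
          rw [List.eraseIdx_append_of_length_le hcase', cs.wordProd_append, ← hp₂] at heq
          set y := cs.wordProd (δ.eraseIdx (m - ω.length)) with hy
          have hyw : y = (p₂⁻¹ * cs.wordProd (k :: ω)) * w := by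
            have h2 : y = p₂⁻¹ * (cs.simple k * (p₂ * w)) := by
              rw [heq]; group
            rw [h2, hcons]
            group
          have hymem : p₂⁻¹ * cs.wordProd (k :: ω) ∈
              Subgroup.closure {cs.simple i, cs.simple j} :=
            Subgroup.mul_mem _ (Subgroup.inv_mem _ hp₂mem) hp
          have h3 : cs.length w ≤ cs.length y := by
            rw [hyw]; exact Hmin _ hymem
          have h4 : cs.length y ≤ (δ.eraseIdx (m - ω.length)).length :=
            cs.length_wordProd_le _
          have h5 : m - ω.length < δ.length := by
            rw [List.length_append] at hm; omega
          have := List.length_eraseIdx_add_one h5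
          have hδl : δ.length = cs.length w := by rw [← hδred, ← hδ]
          omega

end CoxAux

/-- Let `s = s_i`, `t = s_j` be distinct simple reflections with
`M i j` finite, `I = {s, t}`, `q ∈ W`, and let `w` be the minimal-length element of the
coset `W_I q⁻¹` (where `x ∈ W_I q⁻¹ ↔ x * q ∈ W_I`). If `u` is a simple reflection with
`u ∈ q W_I q⁻¹`, then `w u w⁻¹ ∈ I`. -/
theorem conj_simple_mem_pair {B W : Type*} [Group W] {M : CoxeterMatrix B}
    (cs : CoxeterSystem M W) (i j : B) (hij : i ≠ j) (hfin : M.M i j ≠ 0)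
    (q w : W)
    (hw : w * q ∈ Subgroup.closure {cs.simple i, cs.simple j})
    (hmin : ∀ y : W, y * q ∈ Subgroup.closure {cs.simple i, cs.simple j} →
        cs.length w ≤ cs.length y)
    (u : B) (hu : q⁻¹ * cs.simple u * q ∈ Subgroup.closure {cs.simple i, cs.simple j}) :
    w * cs.simple u * w⁻¹ ∈ ({cs.simple i, cs.simple j} : Set W) := by
  set P := Subgroup.closure {cs.simple i, cs.simple j} with hP
  set v := w * cs.simple u * w⁻¹ with hv
  have hvmem : v ∈ P := by
    have : v = (w * q) * (q⁻¹ * cs.simple u * q) * (w * q)⁻¹ := by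
      rw [hv]; group
    rw [this]
    exact Subgroup.mul_mem _ (Subgroup.mul_mem _ hw hu) (Subgroup.inv_mem _ hw)
  have Hmin : ∀ p ∈ P, cs.length w ≤ cs.length (p * w) := by
    intro p hp
    apply hmin
    rw [mul_assoc]
    exact Subgroup.mul_mem _ hp hw
  have hadd : cs.length (v * w) = cs.length v + cs.length w :=
    CoxAux.length_add_of_min cs w Hmin v hvmem
  have hvw : v * w = w * cs.simple u := by rw [hv]; group
  have hle : cs.length (v * w) ≤ cs.length w + 1 := by
    rw [hvw]
    calc cs.length (w * cs.simple u) ≤ cs.length w + cs.length (cs.simple u) :=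
          cs.length_mul_le w (cs.simple u)
      _ = cs.length w + 1 := by rw [cs.length_simple]
  have hv1 : cs.length v ≤ 1 := by omega
  have hvne : v ≠ 1 := by
    intro h
    have : cs.simple u = 1 := by
      have := congrArg (fun x => w⁻¹ * x * w) h
      simpa [hv, mul_assoc] using this
    have := cs.length_simple u
    rw [this] at *
    simp [cs.length_one] at *
    exact absurd (congrArg cs.length ‹cs.simple u = 1›) (by simp [cs.length_simple])
  have hv1' : cs.length v = 1 := by
    rcases Nat.lt_or_ge (cs.length v) 1 with h | h
    · exfalso
      exact hvne (cs.length_eq_zero_iff.mp (by omega))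
    · omega
  obtain ⟨μ, hred, hlet, hμ⟩ := CoxAux.support cs hvmem
  have hμlen : μ.length = 1 := by
    rw [← hred, ← hμ, hv1']
  rcases μ with _ | ⟨l, rest⟩
  · simp at hμlen
  · have : rest = [] := by
      simp only [List.length_cons] at hμlen
      exact List.length_eq_zero_iff.mp (by omega)
    subst this
    have hvl : v = cs.simple l := by rw [hμ, cs.wordProd_singleton]
    rcases hlet l (List.mem_cons_self) with rfl | rfl
    · left; exact hvl
    · right; exact hvl
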